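/- arXiv:1503.07009 — 7 statements merged into one kernel-verified Lean document; each statement's English description precedes it below -/
import Mathlib

section
/- Let H be a real M×M matrix with H_ij ≥ 0 for all i ≠ j, whose columns sum to zero (H_ii = -∑_{k≠i} H_ki), and which is irreducible (there is no permutation matrix Q such that Q H Q⁻¹ has block upper-triangular form with a nontrivial zero block in the lower-left corner). Then the kernel of H is one-dimensional and is spanned by a vector all of whose entries are strictly positive. -/
open Finset Matrix

/-- Irreducibility reformulated: every nonempty proper subset has an incoming
nonzero entry from outside. -/
private lemma wm_irr_finset {M : ℕ} {H : Matrix (Fin M) (Fin M) ℝ}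
    (hirr : ¬ ∃ (m : ℕ) (_ : 0 < m) (_ : m < M) (σ : Equiv.Perm (Fin M)),
        ∀ i j : Fin M, m ≤ (i : ℕ) → (j : ℕ) < m → H (σ i) (σ j) = 0)
    (S : Finset (Fin M)) (hne : S.Nonempty) (hSu : S ≠ Finset.univ) :
    ∃ i j, i ∉ S ∧ j ∈ S ∧ H i j ≠ 0 := by
  classical
  by_contra hcon
  push_neg at hcon
  apply hirr
  have hm0 : 0 < S.card := Finset.card_pos.mpr hne
  have hmM : S.card < M := by
    have h1 := Finset.card_lt_card (Finset.ssubset_univ_iff.mpr hSu)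
    simpa using h1
  have e1' : {a : Fin M // (a : ℕ) < S.card} ≃ Fin S.card :=
    { toFun := fun a => ⟨a.1, a.2⟩
      invFun := fun b => ⟨⟨b.1, lt_trans b.2 hmM⟩, b.2⟩
      left_inv := fun a => rfl
      right_inv := fun b => rfl }
  have c1 : Fintype.card {a : Fin M // (a : ℕ) < S.card} = S.card := by
    rw [Fintype.card_congr e1', Fintype.card_fin]
  have c2 : Fintype.card {a : Fin M // a ∈ S} = S.card := by
    simpa using Fintype.card_coe S
  have e1 : {a : Fin M // (a : ℕ) < S.card} ≃ {a : Fin M // a ∈ S} :=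
    Fintype.equivOfCardEq (by rw [c1, c2])
  have e2 : {a : Fin M // ¬ (a : ℕ) < S.card} ≃ {a : Fin M // ¬ a ∈ S} :=
    Fintype.equivOfCardEq (by
      rw [Fintype.card_subtype_compl, Fintype.card_subtype_compl, c1, c2])
  set σ : Equiv.Perm (Fin M) :=
    (Equiv.sumCompl (fun a : Fin M => (a : ℕ) < S.card)).symm.trans
      ((e1.sumCongr e2).trans (Equiv.sumCompl (fun a => a ∈ S))) with hσ
  have hσ_in : ∀ j : Fin M, (j : ℕ) < S.card → σ j ∈ S := by
    intro j hj
    have : σ j = (e1 ⟨j, hj⟩ : Fin M) := by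
      rw [hσ]
      simp only [Equiv.trans_apply]
      rw [Equiv.sumCompl_symm_apply_of_pos (p := fun a : Fin M => (a : ℕ) < S.card) hj]
      rfl
    rw [this]
    exact (e1 ⟨j, hj⟩).2
  have hσ_out : ∀ i : Fin M, ¬ (i : ℕ) < S.card → σ i ∉ S := by
    intro i hi
    have : σ i = (e2 ⟨i, hi⟩ : Fin M) := by
      rw [hσ]
      simp only [Equiv.trans_apply]
      rw [Equiv.sumCompl_symm_apply_of_neg (p := fun a : Fin M => (a : ℕ) < S.card) hi]
      rfl
    rw [this]
    exact (e2 ⟨i, hi⟩).2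
  exact ⟨S.card, hm0, hmM, σ, fun i j hi hj =>
    hcon _ _ (hσ_out i (not_lt.mpr hi)) (hσ_in j hj)⟩

/-- Core Perron-Frobenius style lemma: any nonzero kernel vector of an
irreducible W-matrix has no zero entries, and its absolute value is also in
the kernel. -/
private lemma wm_key {M : ℕ} {H : Matrix (Fin M) (Fin M) ℝ}
    (hoffdiag : ∀ i j, i ≠ j → 0 ≤ H i j)
    (hcol : ∀ i, H i i = -∑ k ∈ Finset.univ.erase i, H k i)
    (hS : ∀ S : Finset (Fin M), S.Nonempty → S ≠ Finset.univ →
       ∃ i j, i ∉ S ∧ j ∈ S ∧ H i j ≠ 0)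
    {v : Fin M → ℝ} (hv : H.mulVec v = 0) (hv0 : v ≠ 0) :
    (∀ i, v i ≠ 0) ∧ H.mulVec (fun i => |v i|) = 0 := by
  classical
  set c : ℝ := 1 + ∑ i, |H i i| with hcdef
  have hc : 0 < c := by
    have : (0:ℝ) ≤ ∑ i, |H i i| := Finset.sum_nonneg fun i _ => abs_nonneg _
    linarith
  set A : Matrix (Fin M) (Fin M) ℝ := fun i j => H i j + if i = j then c else 0 with hAdef
  have hA0 : ∀ i j, 0 ≤ A i j := by
    intro i j
    by_cases h : i = j
    · subst h
      have h1 : |H i i| ≤ ∑ k, |H k k| :=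
        Finset.single_le_sum (fun k _ => abs_nonneg (H k k)) (Finset.mem_univ i)
      have h2 : -|H i i| ≤ H i i := neg_abs_le _
      have h3 : A i i = H i i + c := by simp [hAdef]
      rw [h3, hcdef]
      linarith [h1, h2]
    · simpa [hAdef, h] using hoffdiag i j h
  have hHsum : ∀ j, ∑ i, H i j = 0 := by
    intro j
    rw [← Finset.sum_erase_add _ _ (Finset.mem_univ j), hcol j]
    ring
  have hAcol : ∀ j, ∑ i, A i j = c := by
    intro j
    simp only [hAdef]
    rw [Finset.sum_add_distrib, hHsum j, Finset.sum_ite_eq' Finset.univ j fun _ => c]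
    simp
  have hHv : ∀ i, ∑ k, H i k * v k = 0 := by
    intro i
    have := congrFun hv i
    simpa [Matrix.mulVec, dotProduct] using this
  have hAv : ∀ i, ∑ k, A i k * v k = c * v i := by
    intro i
    simp only [hAdef, add_mul, Finset.sum_add_distrib, hHv i, zero_add, ite_mul, zero_mul]
    rw [Finset.sum_ite_eq Finset.univ i fun k => c * v k]
    simp
  set u : Fin M → ℝ := fun i => |v i| with hudef
  have claim1 : ∀ i, c * u i ≤ ∑ k, A i k * u k := by
    intro i
    have h1 : c * u i = |∑ k, A i k * v k| := by
      rw [hAv i, abs_mul, abs_of_pos hc]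
    rw [h1]
    refine (Finset.abs_sum_le_sum_abs _ _).trans ?_
    refine le_of_eq (Finset.sum_congr rfl fun k _ => ?_)
    rw [abs_mul, abs_of_nonneg (hA0 i k)]
  have claim2 : ∑ i, ∑ k, A i k * u k = ∑ i, c * u i := by
    rw [Finset.sum_comm]
    refine Finset.sum_congr rfl fun k _ => ?_
    rw [← Finset.sum_mul, hAcol k]
  have eqAll : ∀ i, c * u i = ∑ k, A i k * u k := by
    have := (Finset.sum_eq_sum_iff_of_le (fun i _ => claim1 i)).mp claim2.symm
    exact fun i => this i (Finset.mem_univ i)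
  have hne : ∀ i, v i ≠ 0 := by
    set S : Finset (Fin M) := Finset.univ.filter (fun i => v i ≠ 0) with hSdef
    have hSne : S.Nonempty := by
      rcases Function.ne_iff.mp hv0 with ⟨i, hi⟩
      have hi' : v i ≠ 0 := by simpa using hi
      exact ⟨i, by simp [hSdef, hi']⟩
    have hSuniv : S = Finset.univ := by
      by_contra hSu
      obtain ⟨i, j, hiS, hjS, hij⟩ := hS S hSne hSu
      have hvi : v i = 0 := by
        by_contra h
        exact hiS (by simp [hSdef, h])
      have hvj : v j ≠ 0 := by
        simpa [hSdef] using hjS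
      have hinej : i ≠ j := fun h => hvj (h ▸ hvi)
      have hsum0 : ∑ k, A i k * u k = 0 := by
        rw [← eqAll i]
        simp [hudef, hvi]
      have hterm : A i j * u j = 0 :=
        (Finset.sum_eq_zero_iff_of_nonneg
          (fun k _ => mul_nonneg (hA0 i k) (abs_nonneg _))).mp hsum0 j (Finset.mem_univ j)
      have hAij : 0 < A i j := by
        have : A i j = H i j := by simp [hAdef, hinej]
        rw [this]
        exact (hoffdiag i j hinej).lt_of_ne (Ne.symm hij)
      have huj : 0 < u j := abs_pos.mpr hvj
      exact absurd hterm (ne_of_gt (mul_pos hAij huj))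
    intro i
    have hmem : i ∈ S := hSuniv ▸ Finset.mem_univ i
    rw [hSdef] at hmem
    exact (Finset.mem_filter.mp hmem).2
  refine ⟨hne, ?_⟩
  funext i
  have h1 : ∑ k, H i k * u k = 0 := by
    have h2 : ∑ k, A i k * u k = ∑ k, H i k * u k + c * u i := by
      simp only [hAdef, add_mul, Finset.sum_add_distrib, ite_mul, zero_mul]
      rw [Finset.sum_ite_eq Finset.univ i fun k => c * u k]
      simp
    have := eqAll i
    rw [h2] at this
    linarith
  simpa [Matrix.mulVec, dotProduct] using h1

/-- **Kernel of an irreducible W-matrix.**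
If `H` is a real `M × M` matrix with nonnegative off-diagonal entries, columns summing
to zero, and irreducible (no permutation similarity to a block upper-triangular form
with a nontrivial zero lower-left block), then the kernel of `H` is one-dimensional,
spanned by a vector with strictly positive entries. -/
theorem kernel_of_irreducible_W_matrix
    (M : ℕ) (H : Matrix (Fin M) (Fin M) ℝ)
    (hoffdiag : ∀ i j, i ≠ j → 0 ≤ H i j)
    (hcol : ∀ i, H i i = -∑ k ∈ Finset.univ.erase i, H k i)
    (hirr : ¬ ∃ (m : ℕ) (_ : 0 < m) (_ : m < M) (σ : Equiv.Perm (Fin M)),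
        ∀ i j : Fin M, m ≤ (i : ℕ) → (j : ℕ) < m → H (σ i) (σ j) = 0) :
    ∃ v : Fin M → ℝ, (∀ i, 0 < v i) ∧ H.mulVec v = 0 ∧
      ∀ w : Fin M → ℝ, H.mulVec w = 0 → ∃ c : ℝ, w = c • v := by
  classical
  rcases Nat.eq_zero_or_pos M with hM | hM
  · subst hM
    refine ⟨0, fun i => i.elim0, funext fun i => i.elim0, fun w _ => ⟨0, funext fun i => i.elim0⟩⟩
  have hS := wm_irr_finset hirr
  -- existence of a nonzero kernel vector
  have hdet : H.det = 0 := by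
    rw [← Matrix.det_transpose]
    apply Matrix.exists_mulVec_eq_zero_iff.mp
    refine ⟨fun _ => 1, ?_, ?_⟩
    · intro h
      have := congrFun h ⟨0, hM⟩
      simpa using this
    · funext i
      have : ∑ k, H k i = 0 := by
        rw [← Finset.sum_erase_add _ _ (Finset.mem_univ i), hcol i]
        ring
      simpa [Matrix.mulVec, dotProduct, Matrix.transpose] using this
  obtain ⟨v₀, hv₀ne, hv₀⟩ := Matrix.exists_mulVec_eq_zero_iff.mpr hdet
  obtain ⟨hvne, hvabs⟩ := wm_key hoffdiag hcol hS hv₀ hv₀ne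
  -- all entries of v₀ have the same sign
  set u : Fin M → ℝ := fun i => |v₀ i| with hudef
  have hupos : ∀ i, 0 < u i := fun i => abs_pos.mpr (hvne i)
  have hsign : (∀ i, 0 < v₀ i) ∨ (∀ i, v₀ i < 0) := by
    by_contra hcon
    push_neg at hcon
    obtain ⟨⟨i, hi⟩, ⟨j, hj⟩⟩ := hcon
    -- v₀ i ≤ 0 (so < 0), v₀ j ≥ 0 (so > 0)
    have hvi : v₀ i < 0 := hi.lt_of_ne (hvne i)
    have hvj : 0 < v₀ j := hj.lt_of_ne (Ne.symm (hvne j))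
    have hz : H.mulVec (u - v₀) = 0 := by
      rw [Matrix.mulVec_sub, hvabs, hv₀, sub_zero]
    have hzj : (u - v₀) j = 0 := by
      simp [hudef, abs_of_pos hvj]
    have hzne : u - v₀ ≠ 0 := by
      intro h
      have := congrFun h i
      simp only [Pi.sub_apply, Pi.zero_apply, sub_eq_zero, hudef] at this
      rw [abs_of_neg hvi] at this
      linarith
    exact (wm_key hoffdiag hcol hS hz hzne).1 j hzj
  -- normalize to a positive kernel vector
  obtain ⟨v, hvpos, hvker⟩ : ∃ v : Fin M → ℝ, (∀ i, 0 < v i) ∧ H.mulVec v = 0 := by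
    rcases hsign with h | h
    · exact ⟨v₀, h, hv₀⟩
    · refine ⟨-v₀, fun i => by simpa using h i, ?_⟩
      rw [Matrix.mulVec_neg, hv₀, neg_zero]
  refine ⟨v, hvpos, hvker, ?_⟩
  intro w hw
  set i₀ : Fin M := ⟨0, hM⟩
  refine ⟨w i₀ / v i₀, ?_⟩
  by_contra hne
  have hzker : H.mulVec (w - (w i₀ / v i₀) • v) = 0 := by
    rw [Matrix.mulVec_sub, Matrix.mulVec_smul, hw, hvker, smul_zero, sub_zero]
  have hzne : w - (w i₀ / v i₀) • v ≠ 0 := fun h => hne (by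
    have := sub_eq_zero.mp h
    exact this)
  have := (wm_key hoffdiag hcol hS hzker hzne).1 i₀
  apply this
  have hv0' : v i₀ ≠ 0 := ne_of_gt (hvpos i₀)
  simp only [Pi.sub_apply, Pi.smul_apply, smul_eq_mul]
  rw [div_mul_cancel₀ _ hv0', sub_self]
end

section
/- Let H be a real M×M irreducible W-matrix (H_ij ≥ 0 for i ≠ j, columns summing to zero, and no permutation similarity to a block upper-triangular matrix), and let u∞ be the unique vector with H u∞ = 0, strictly positive entries, and ∑_i (u∞)_i = 1. Then for every initial vector ξ₀ ∈ ℝ^M, the solution exp(tH) ξ₀ of the ODE ξ' = Hξ converges as t → ∞ to the equilibrium (∑_i (ξ₀)_i) · u∞. -/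
open NormedSpace
open scoped Matrix

namespace WM

variable {M : ℕ}

attribute [local instance] Matrix.linftyOpSemiNormedRing Matrix.linftyOpNormedRing
  Matrix.linftyOpNormedAlgebra

noncomputable def mulVecCLM (x : Fin M → ℝ) :
    Matrix (Fin M) (Fin M) ℝ →L[ℝ] (Fin M → ℝ) :=
  LinearMap.toContinuousLinearMap
    { toFun := fun B => B.mulVec x
      map_add' := fun B C => Matrix.add_mulVec B C x
      map_smul' := fun c B => Matrix.smul_mulVec c B x }

noncomputable def entryCLM (i j : Fin M) :
    Matrix (Fin M) (Fin M) ℝ →L[ℝ] ℝ :=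
  LinearMap.toContinuousLinearMap
    { toFun := fun B => B i j
      map_add' := fun _ _ => rfl
      map_smul' := fun _ _ => rfl }

theorem exp_mulVec_tsum (A : Matrix (Fin M) (Fin M) ℝ) (x : Fin M → ℝ) :
    (exp A).mulVec x = ∑' n : ℕ, (n.factorial : ℝ)⁻¹ • ((A ^ n).mulVec x) := by
  have h := (mulVecCLM x).map_tsum (expSeries_summable' (𝕂 := ℝ) A)
  rw [exp_eq_tsum ℝ]
  simpa [mulVecCLM, Matrix.smul_mulVec] using h

theorem exp_entry_tsum (A : Matrix (Fin M) (Fin M) ℝ) (i j : Fin M) :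
    (exp A) i j = ∑' n : ℕ, (n.factorial : ℝ)⁻¹ * ((A ^ n) i j) := by
  have h := (entryCLM i j).map_tsum (expSeries_summable' (𝕂 := ℝ) A)
  rw [exp_eq_tsum ℝ]
  exact h

theorem exp_entry_summable (A : Matrix (Fin M) (Fin M) ℝ) (i j : Fin M) :
    Summable (fun n : ℕ => (n.factorial : ℝ)⁻¹ * ((A ^ n) i j)) := by
  have h := (expSeries_summable' (𝕂 := ℝ) A).map (entryCLM i j) (entryCLM i j).continuous
  exact h

theorem exp_mulVec_of_kernel {A : Matrix (Fin M) (Fin M) ℝ} {x : Fin M → ℝ}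
    (hx : A.mulVec x = 0) : (exp A).mulVec x = x := by
  rw [exp_mulVec_tsum]
  rw [tsum_eq_single 0 ?_]
  · simp
  · intro n hn
    obtain ⟨k, rfl⟩ := Nat.exists_eq_succ_of_ne_zero hn
    rw [pow_succ, ← Matrix.mulVec_mulVec, hx, Matrix.mulVec_zero, smul_zero]

theorem pow_entry_nonneg {A : Matrix (Fin M) (Fin M) ℝ} (hA : ∀ i j, 0 ≤ A i j) (n : ℕ) :
    ∀ i j, 0 ≤ (A ^ n) i j := by
  induction n with
  | zero => intro i j; rw [pow_zero]; by_cases h : i = j <;> simp [Matrix.one_apply, h]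
  | succ k ih =>
    intro i j
    rw [pow_succ, Matrix.mul_apply]
    exact Finset.sum_nonneg fun l _ => mul_nonneg (ih i l) (hA l j)

theorem exp_entry_nonneg {A : Matrix (Fin M) (Fin M) ℝ} (hA : ∀ i j, 0 ≤ A i j) (i j : Fin M) :
    0 ≤ (exp A) i j := by
  rw [exp_entry_tsum]
  exact tsum_nonneg fun n => mul_nonneg (by positivity) (pow_entry_nonneg hA n i j)

theorem le_exp_entry {A : Matrix (Fin M) (Fin M) ℝ} (hA : ∀ i j, 0 ≤ A i j) (n : ℕ)
    (i j : Fin M) : (n.factorial : ℝ)⁻¹ * ((A ^ n) i j) ≤ (exp A) i j := by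
  rw [exp_entry_tsum]
  exact Summable.le_tsum (exp_entry_summable A i j) n
    (fun m _ => mul_nonneg (by positivity) (pow_entry_nonneg hA m i j))

theorem exp_colsum {A : Matrix (Fin M) (Fin M) ℝ} (hA : ∀ j, ∑ i, A i j = 0) (j : Fin M) :
    ∑ i, (exp A) i j = 1 := by
  have hk : Aᵀ.mulVec (fun _ => 1) = 0 := by
    funext i
    simpa [Matrix.mulVec, dotProduct, Matrix.transpose_apply] using hA i
  have h := exp_mulVec_of_kernel hk
  rw [Matrix.exp_transpose] at h
  have := congrFun h j
  simpa [Matrix.mulVec, dotProduct, Matrix.transpose_apply] using this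

theorem exp_add_smul_one (B : Matrix (Fin M) (Fin M) ℝ) (c : ℝ) :
    exp (B + c • (1 : Matrix (Fin M) (Fin M) ℝ)) = Real.exp c • exp B := by
  rw [Matrix.exp_add_of_commute _ _ ((Commute.one_right B).smul_right c)]
  have h1 : (c • (1 : Matrix (Fin M) (Fin M) ℝ)) = Matrix.diagonal (fun _ => c) := by
    ext i j
    by_cases h : i = j <;> simp [Matrix.one_apply, Matrix.diagonal_apply, h]
  rw [h1, Matrix.exp_diagonal]
  have h2 : exp (fun _ : Fin M => c) = fun _ : Fin M => Real.exp c := by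
    funext i
    rw [Pi.coe_exp]
    exact (congrFun Real.exp_eq_exp_ℝ c).symm
  rw [h2]
  have h3 : Matrix.diagonal (fun _ : Fin M => Real.exp c) =
      Real.exp c • (1 : Matrix (Fin M) (Fin M) ℝ) := by
    ext i j
    by_cases h : i = j <;> simp [Matrix.one_apply, Matrix.diagonal_apply, h]
  rw [h3, mul_smul_comm, mul_one]

theorem exists_pow_pos {H A : Matrix (Fin M) (Fin M) ℝ}
    (hA : ∀ i j, 0 ≤ A i j) (hAH : ∀ i j, i ≠ j → A i j = H i j)
    (hirr : ¬ ∃ (m : ℕ) (_ : 0 < m) (_ : m < M) (σ : Equiv.Perm (Fin M)),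
        ∀ i j : Fin M, m ≤ (i : ℕ) → (j : ℕ) < m → H (σ i) (σ j) = 0)
    (i j : Fin M) : ∃ n, 0 < (A ^ n) i j := by
  classical
  by_contra hcon
  push_neg at hcon
  have hzero : ∀ n, (A ^ n) i j = 0 :=
    fun n => le_antisymm (hcon n) (pow_entry_nonneg hA n i j)
  set S : Finset (Fin M) := Finset.univ.filter (fun k => ∃ n, 0 < (A ^ n) k j) with hS
  have hjS : j ∈ S := by
    refine Finset.mem_filter.2 ⟨Finset.mem_univ _, ⟨0, ?_⟩⟩
    simp [Matrix.one_apply]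
  have hiS : i ∉ S := by
    simp only [hS, Finset.mem_filter]
    rintro ⟨-, n, hn⟩
    rw [hzero n] at hn
    exact lt_irrefl 0 hn
  have hclosed : ∀ a, a ∉ S → ∀ b, b ∈ S → A a b = 0 := by
    intro a ha b hb
    by_contra hab
    have hab' : 0 < A a b := lt_of_le_of_ne (hA a b) (Ne.symm hab)
    obtain ⟨-, n, hn⟩ := Finset.mem_filter.1 hb
    apply ha
    refine Finset.mem_filter.2 ⟨Finset.mem_univ _, ⟨n + 1, ?_⟩⟩
    rw [pow_succ', Matrix.mul_apply]
    calc (0:ℝ) < A a b * (A ^ n) b j := mul_pos hab' hn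
      _ ≤ ∑ k, A a k * (A ^ n) k j :=
        Finset.single_le_sum (fun k _ => mul_nonneg (hA a k) (pow_entry_nonneg hA n k j))
          (Finset.mem_univ b)
  have hmle : S.card ≤ M := by
    have := Finset.card_le_univ S
    simpa using this
  have hMm : S.card + (M - S.card) = M := Nat.add_sub_cancel' hmle
  have hcompl : (M - S.card) = Sᶜ.card := by
    rw [Finset.card_compl, Fintype.card_fin]
  let e1 : Fin S.card ≃ {x // x ∈ S} := S.equivFin.symm
  let e2 : Fin (M - S.card) ≃ {x : Fin M // ¬ x ∈ S} :=
    ((finCongr hcompl).trans Sᶜ.equivFin.symm).trans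
      (Equiv.subtypeEquivRight fun x => Finset.mem_compl)
  let σ : Equiv.Perm (Fin M) :=
    (finCongr hMm.symm).trans (finSumFinEquiv.symm.trans
      ((e1.sumCongr e2).trans (Equiv.sumCompl (fun x => x ∈ S))))
  have hσ : ∀ x : Fin M, σ x = (Equiv.sumCompl (fun x => x ∈ S))
      ((e1.sumCongr e2) (finSumFinEquiv.symm (finCongr hMm.symm x))) := fun _ => rfl
  have hmM : S.card < M := by
    have hne : S ≠ Finset.univ := fun h => hiS (h ▸ Finset.mem_univ i)
    have := Finset.card_lt_card (Finset.ssubset_univ_iff.mpr hne)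
    simpa using this
  refine hirr ⟨S.card, Finset.card_pos.2 ⟨j, hjS⟩, hmM, σ, ?_⟩
  intro a b ha hb
  have hσb : σ b ∈ S := by
    rcases hy : finSumFinEquiv.symm (finCongr hMm.symm b) with p | p
    · rw [hσ b, hy]
      simpa using (e1 p).2
    · exfalso
      have h2 := congrArg finSumFinEquiv hy
      rw [Equiv.apply_symm_apply] at h2
      have hval := congrArg Fin.val h2
      simp [finCongr_apply] at hval
      omega
  have hσa : σ a ∉ S := by
    rcases hy : finSumFinEquiv.symm (finCongr hMm.symm a) with p | p
    · exfalso
      have h2 := congrArg finSumFinEquiv hy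
      rw [Equiv.apply_symm_apply] at h2
      have hval := congrArg Fin.val h2
      simp [finCongr_apply] at hval
      have := p.isLt
      omega
    · rw [hσ a, hy]
      simpa using (e2 p).2
  have hne : σ a ≠ σ b := fun h => hσa (h ▸ hσb)
  rw [← hAH _ _ hne]
  exact hclosed _ hσa _ hσb

theorem contract {P : Matrix (Fin M) (Fin M) ℝ} {ε : ℝ} (hε : 0 ≤ ε)
    (hP : ∀ i j, ε ≤ P i j) (hcolP : ∀ j, ∑ i, P i j = 1)
    {v : Fin M → ℝ} (hv : ∑ j, v j = 0) :
    ∑ i, |P.mulVec v i| ≤ (1 - M * ε) * ∑ j, |v j| := by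
  have key : ∀ i, |P.mulVec v i| ≤ ∑ j, (P i j - ε) * |v j| := by
    intro i
    have h1 : P.mulVec v i = ∑ j, (P i j - ε) * v j := by
      simp [Matrix.mulVec, dotProduct, sub_mul, Finset.sum_sub_distrib,
        ← Finset.mul_sum, hv]
    rw [h1]
    calc |∑ j, (P i j - ε) * v j| ≤ ∑ j, |(P i j - ε) * v j| :=
          Finset.abs_sum_le_sum_abs _ _
      _ = ∑ j, (P i j - ε) * |v j| := by
          refine Finset.sum_congr rfl fun j _ => ?_
          rw [abs_mul, abs_of_nonneg (sub_nonneg.2 (hP i j))]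
  calc ∑ i, |P.mulVec v i| ≤ ∑ i, ∑ j, (P i j - ε) * |v j| :=
        Finset.sum_le_sum fun i _ => key i
    _ = ∑ j, (∑ i, (P i j - ε)) * |v j| := by
        rw [Finset.sum_comm]
        exact Finset.sum_congr rfl fun j _ => (Finset.sum_mul _ _ _).symm
    _ = (1 - M * ε) * ∑ j, |v j| := by
        rw [Finset.mul_sum]
        refine Finset.sum_congr rfl fun j _ => ?_
        rw [Finset.sum_sub_distrib, hcolP j, Finset.sum_const, Finset.card_univ,
          Fintype.card_fin, nsmul_eq_mul]

theorem mulVec_sum_zero {P : Matrix (Fin M) (Fin M) ℝ}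
    (hcolP : ∀ j, ∑ i, P i j = 1) {v : Fin M → ℝ} (hv : ∑ j, v j = 0) :
    ∑ i, P.mulVec v i = 0 := by
  simp only [Matrix.mulVec, dotProduct]
  rw [Finset.sum_comm]
  calc ∑ j, ∑ i, P i j * v j = ∑ j, (∑ i, P i j) * v j := by
        simp [Finset.sum_mul]
    _ = ∑ j, v j := by
        refine Finset.sum_congr rfl fun j _ => ?_
        rw [hcolP j, one_mul]
    _ = 0 := hv


end WM

open WM in
/-- **Convergence to equilibrium for an irreducible W-matrix.**
Let `H` be a real `M × M` irreducible W-matrix and `uInf` the unique strictly positive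
kernel vector with unit total mass.  Then for every initial vector `ξ₀`, the solution
`exp(tH) ξ₀` of `ξ' = H ξ` converges as `t → ∞` to `(∑ i, ξ₀ i) • uInf`. -/
theorem W_matrix_convergence_to_equilibrium
    (M : ℕ) (H : Matrix (Fin M) (Fin M) ℝ)
    (hoffdiag : ∀ i j, i ≠ j → 0 ≤ H i j)
    (hcol : ∀ i, H i i = -∑ k ∈ Finset.univ.erase i, H k i)
    (hirr : ¬ ∃ (m : ℕ) (_ : 0 < m) (_ : m < M) (σ : Equiv.Perm (Fin M)),
        ∀ i j : Fin M, m ≤ (i : ℕ) → (j : ℕ) < m → H (σ i) (σ j) = 0)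
    (uInf : Fin M → ℝ)
    (hker : H.mulVec uInf = 0)
    (hpos : ∀ i, 0 < uInf i)
    (hmass : ∑ i, uInf i = 1) :
    ∀ ξ₀ : Fin M → ℝ,
      Filter.Tendsto (fun t : ℝ => (NormedSpace.exp (t • H)).mulVec ξ₀)
        Filter.atTop (nhds ((∑ i, ξ₀ i) • uInf)) := by
  classical
  intro ξ₀
  have hM : 0 < M := by
    rcases Nat.eq_zero_or_pos M with h | h
    · subst h; simp at hmass
    · exact h
  -- column sums of H vanish
  have hcol0 : ∀ j, ∑ i, H i j = 0 := by
    intro j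
    have h2 : ∑ i, H i j = H j j + ∑ k ∈ Finset.univ.erase j, H k j :=
      (Finset.add_sum_erase _ _ (Finset.mem_univ j)).symm
    rw [h2, hcol j]; ring
  -- the nonnegative shift A = H + c • 1
  set c : ℝ := 1 + ∑ i, (-H i i) with hc
  have hdiagnn : ∀ i, (0:ℝ) ≤ -H i i := by
    intro i
    rw [hcol i, neg_neg]
    exact Finset.sum_nonneg fun k hk => hoffdiag k i (Finset.ne_of_mem_erase hk)
  have hc1 : ∀ i, (0:ℝ) ≤ H i i + c := by
    intro i
    have h1 : -H i i ≤ ∑ k, -H k k :=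
      Finset.single_le_sum (fun k _ => hdiagnn k) (Finset.mem_univ i)
    rw [hc]; linarith
  have hc0 : (0:ℝ) ≤ c := by
    rw [hc]
    have : (0:ℝ) ≤ ∑ i, -H i i := Finset.sum_nonneg fun i _ => hdiagnn i
    linarith
  set A : Matrix (Fin M) (Fin M) ℝ := H + c • 1 with hA
  have hAnn : ∀ i j, 0 ≤ A i j := by
    intro i j
    by_cases h : i = j
    · subst h
      simpa [hA, Matrix.one_apply] using hc1 i
    · simpa [hA, Matrix.one_apply, h] using hoffdiag i j h
  have hAH : ∀ i j, i ≠ j → A i j = H i j := by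
    intro i j h
    simp [hA, Matrix.one_apply, h]
  -- column sums of exp (t • H) are 1
  have hcolsum : ∀ (t : ℝ) j, ∑ i, (NormedSpace.exp (t • H)) i j = 1 := by
    intro t j
    apply exp_colsum
    intro j'
    simp [Matrix.smul_apply, smul_eq_mul, ← Finset.mul_sum, hcol0 j']
  -- uInf is preserved
  have hexpker : ∀ t : ℝ, (NormedSpace.exp (t • H)).mulVec uInf = uInf := by
    intro t
    apply exp_mulVec_of_kernel
    rw [Matrix.smul_mulVec, hker, smul_zero]
  -- splitting of t • H
  have hsplit : ∀ t : ℝ, t • H = t • A + (-(t * c)) • (1 : Matrix (Fin M) (Fin M) ℝ) := by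
    intro t
    rw [hA]
    module
  -- nonnegativity of exp (t • H) for t ≥ 0
  have hexpnn : ∀ t : ℝ, 0 ≤ t → ∀ i j, 0 ≤ (NormedSpace.exp (t • H)) i j := by
    intro t ht i j
    rw [hsplit t, exp_add_smul_one, Matrix.smul_apply, smul_eq_mul]
    refine mul_nonneg (Real.exp_nonneg _) (exp_entry_nonneg ?_ i j)
    intro i' j'
    rw [Matrix.smul_apply, smul_eq_mul]
    exact mul_nonneg ht (hAnn i' j')
  -- strict positivity of P = exp (1 • H)
  set P : Matrix (Fin M) (Fin M) ℝ := NormedSpace.exp ((1:ℝ) • H) with hPdef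
  have hApos : ∀ i j, ∃ n, 0 < (A ^ n) i j := exists_pow_pos hAnn hAH hirr
  have hPpos : ∀ i j, 0 < P i j := by
    intro i j
    rw [hPdef, hsplit 1, exp_add_smul_one, Matrix.smul_apply, smul_eq_mul, one_smul]
    refine mul_pos (Real.exp_pos _) ?_
    obtain ⟨n, hn⟩ := hApos i j
    calc (0:ℝ) < (n.factorial : ℝ)⁻¹ * ((A ^ n) i j) := by positivity
      _ ≤ (NormedSpace.exp A) i j := le_exp_entry hAnn n i j
  -- the contraction constant
  have hne : (Finset.univ : Finset (Fin M × Fin M)).Nonempty :=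
    ⟨(⟨0, hM⟩, ⟨0, hM⟩), Finset.mem_univ _⟩
  set ε : ℝ := Finset.univ.inf' hne (fun p : Fin M × Fin M => P p.1 p.2) with hεdef
  have hεpos : 0 < ε := by
    rw [hεdef, Finset.lt_inf'_iff]
    exact fun p _ => hPpos p.1 p.2
  have hεle : ∀ i j, ε ≤ P i j := fun i j =>
    Finset.inf'_le _ (Finset.mem_univ (i, j))
  set q : ℝ := 1 - M * ε with hq
  have hq0 : 0 ≤ q := by
    have h1 : (M : ℝ) * ε = ∑ _i : Fin M, ε := by
      rw [Finset.sum_const, Finset.card_univ, Fintype.card_fin, nsmul_eq_mul]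
    have h2 : ∑ _i : Fin M, ε ≤ ∑ i, P i ⟨0, hM⟩ :=
      Finset.sum_le_sum fun i _ => hεle i ⟨0, hM⟩
    rw [hcolsum 1 ⟨0, hM⟩] at h2
    rw [hq]; linarith [h1 ▸ h2]
  have hq1 : q < 1 := by
    have : (0:ℝ) < M * ε := mul_pos (by exact_mod_cast hM) hεpos
    rw [hq]; linarith
  -- the deviation vector
  set v₀ : Fin M → ℝ := ξ₀ - (∑ i, ξ₀ i) • uInf with hv₀def
  have hv₀ : ∑ j, v₀ j = 0 := by
    simp only [hv₀def, Pi.sub_apply, Pi.smul_apply, smul_eq_mul]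
    rw [Finset.sum_sub_distrib, ← Finset.mul_sum, hmass, mul_one, sub_self]
  have hrew : ∀ t : ℝ, (NormedSpace.exp (t • H)).mulVec ξ₀ - (∑ i, ξ₀ i) • uInf
      = (NormedSpace.exp (t • H)).mulVec v₀ := by
    intro t
    rw [hv₀def, Matrix.mulVec_sub, Matrix.mulVec_smul, hexpker t]
  -- the key iteration bound
  have key : ∀ n : ℕ, ∀ v : Fin M → ℝ, ∑ j, v j = 0 → ∀ s : ℝ, 0 ≤ s →
      ∑ i, |(NormedSpace.exp (((s + n : ℝ)) • H)).mulVec v i| ≤ q ^ n * ∑ j, |v j| := by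
    intro n
    induction n with
    | zero =>
      intro v hv s hs
      have h := contract (le_refl (0:ℝ)) (fun i j => hexpnn s hs i j) (hcolsum s) hv
      simpa using h
    | succ n ih =>
      intro v hv s hs
      have hsplit2 : ((s + (n + 1 : ℕ) : ℝ)) • H = ((s + n : ℝ)) • H + (1:ℝ) • H := by
        push_cast
        module
      have hcomm : Commute (((s + n : ℝ)) • H) ((1:ℝ) • H) :=
        ((Commute.refl H).smul_left _).smul_right _
      rw [hsplit2, Matrix.exp_add_of_commute _ _ hcomm, ← Matrix.mulVec_mulVec]
      set v1 : Fin M → ℝ := P.mulVec v with hv1def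
      have hv1 : ∑ i, v1 i = 0 := mulVec_sum_zero (hcolsum 1) hv
      have h1 : ∑ j, |v1 j| ≤ q * ∑ j, |v j| := by
        have h := contract hεpos.le hεle (hcolsum 1) hv
        rw [hq]
        exact h
      calc ∑ i, |(NormedSpace.exp (((s + n : ℝ)) • H)).mulVec v1 i|
          ≤ q ^ n * ∑ j, |v1 j| := ih v1 hv1 s hs
        _ ≤ q ^ n * (q * ∑ j, |v j|) :=
            mul_le_mul_of_nonneg_left h1 (pow_nonneg hq0 n)
        _ = q ^ (n + 1) * ∑ j, |v j| := by ring
  -- conclusion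
  rw [tendsto_pi_nhds]
  intro i
  rw [← tendsto_sub_nhds_zero_iff]
  have hgtends : Filter.Tendsto (fun t : ℝ => q ^ ⌊t⌋₊ * ∑ j, |v₀ j|)
      Filter.atTop (nhds 0) := by
    have h1 : Filter.Tendsto (fun t : ℝ => q ^ ⌊t⌋₊) Filter.atTop (nhds 0) :=
      (tendsto_pow_atTop_nhds_zero_of_lt_one hq0 hq1).comp tendsto_nat_floor_atTop
    simpa using h1.mul_const (∑ j, |v₀ j|)
  refine squeeze_zero_norm' ?_ hgtends
  filter_upwards [Filter.eventually_ge_atTop (0:ℝ)] with t ht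
  have hfloor : (0:ℝ) ≤ t - ⌊t⌋₊ := sub_nonneg.2 (Nat.floor_le ht)
  have hts : ((t - ⌊t⌋₊) + (⌊t⌋₊ : ℕ) : ℝ) = t := by push_cast; ring
  have hb := key ⌊t⌋₊ v₀ hv₀ (t - ⌊t⌋₊) hfloor
  rw [hts] at hb
  have hcoord : (NormedSpace.exp (t • H)).mulVec ξ₀ i - ((∑ i, ξ₀ i) • uInf) i
      = (NormedSpace.exp (t • H)).mulVec v₀ i := by
    have := congrFun (hrew t) i
    simpa using this
  rw [Real.norm_eq_abs, hcoord]
  calc |(NormedSpace.exp (t • H)).mulVec v₀ i|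
      ≤ ∑ i', |(NormedSpace.exp (t • H)).mulVec v₀ i'| :=
        Finset.single_le_sum (f := fun i' => |(NormedSpace.exp (t • H)).mulVec v₀ i'|)
          (fun i' _ => abs_nonneg _) (Finset.mem_univ i)
    _ ≤ q ^ ⌊t⌋₊ * ∑ j, |v₀ j| := hb
end

section
/- Let H be a real M×M matrix with H_ij ≥ 0 for all i ≠ j and whose columns sum to zero (H_ii = -∑_{k≠i} H_ki), and let η : ℝ → ℝ^M be differentiable with η'(t) = H^T η(t) for all t ≥ 0. Then the largest component of η is nonincreasing and the smallest component is nondecreasing: for all 0 ≤ s ≤ t, max_i η_i(t) ≤ max_i η_i(s) and min_i η_i(t) ≥ min_i η_i(s). -/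
open NormedSpace

namespace WmatAux

variable {M : ℕ}

/-- entrywise evaluation of the operator exponential -/
theorem exp_apply_eq (T : (Fin M → ℝ) →L[ℝ] (Fin M → ℝ)) (x : Fin M → ℝ) (i : Fin M) :
    exp T x i = ∑' n : ℕ, ((Nat.factorial n : ℝ))⁻¹ * ((T ^ n) x i) := by
  have hs := expSeries_summable' (𝕂 := ℝ) T
  have := ((ContinuousLinearMap.proj (R := ℝ) (φ := fun _ : Fin M => ℝ) i).comp
      (ContinuousLinearMap.apply ℝ (Fin M → ℝ) x)).map_tsum hs
  rw [exp_eq_tsum ℝ]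
  simpa using this

/-- if `T` preserves entrywise nonnegativity, so does `exp T` -/
theorem exp_nonneg_aux (T : (Fin M → ℝ) →L[ℝ] (Fin M → ℝ))
    (hT : ∀ x : Fin M → ℝ, (∀ i, 0 ≤ x i) → ∀ i, 0 ≤ T x i)
    (x : Fin M → ℝ) (hx : ∀ i, 0 ≤ x i) (i : Fin M) : 0 ≤ exp T x i := by
  have hpow : ∀ n : ℕ, ∀ j, 0 ≤ (T ^ n) x j := by
    intro n
    induction n with
    | zero => simpa using hx
    | succ n ih =>
      intro j
      have : (T ^ (n + 1)) x = T ((T ^ n) x) := by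
        rw [pow_succ']; rfl
      rw [this]
      exact hT _ ih j
  rw [exp_apply_eq]
  refine tsum_nonneg fun n => ?_
  exact mul_nonneg (by positivity) (hpow n i)

theorem exp_fixes_one (T : (Fin M → ℝ) →L[ℝ] (Fin M → ℝ))
    (hT : T (fun _ => 1) = 0) (i : Fin M) : exp T (fun _ => 1) i = 1 := by
  have hpow : ∀ n : ℕ, n ≠ 0 → (T ^ n) (fun _ => 1) = 0 := by
    intro n hn
    obtain ⟨m, rfl⟩ := Nat.exists_eq_succ_of_ne_zero hn
    have : (T ^ (m + 1)) (fun _ => 1) = (T ^ m) (T (fun _ => 1)) := by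
      rw [pow_succ]; rfl
    rw [this, hT, map_zero]
  rw [exp_apply_eq]
  rw [tsum_eq_single 0 (by intro n hn; simp [hpow n hn])]
  simp

theorem exp_shift (T : (Fin M → ℝ) →L[ℝ] (Fin M → ℝ)) (r : ℝ) :
    exp (T + r • (1 : (Fin M → ℝ) →L[ℝ] (Fin M → ℝ))) = Real.exp r • exp T := by
  have hc : Commute T (r • (1 : (Fin M → ℝ) →L[ℝ] (Fin M → ℝ))) :=
    (Commute.one_right T).smul_right r
  letI : NormedAlgebra ℚ ((Fin M → ℝ) →L[ℝ] (Fin M → ℝ)) :=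
    NormedAlgebra.restrictScalars ℚ ℝ _
  rw [exp_add_of_commute hc]
  have h1 : (r • (1 : (Fin M → ℝ) →L[ℝ] (Fin M → ℝ))) =
      algebraMap ℝ _ r := (Algebra.algebraMap_eq_smul_one _).symm
  rw [h1, ← algebraMap_exp_comm, ← Real.exp_eq_exp_ℝ,
    Algebra.algebraMap_eq_smul_one, mul_smul_comm, mul_one]

/-- positivity of the exponential of a shifted-nonnegative operator -/
theorem exp_nonneg (T : (Fin M → ℝ) →L[ℝ] (Fin M → ℝ)) (c : ℝ)
    (hT : ∀ x : Fin M → ℝ, (∀ i, 0 ≤ x i) → ∀ i,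
      0 ≤ T x i + c * x i)
    (x : Fin M → ℝ) (hx : ∀ i, 0 ≤ x i) (i : Fin M) : 0 ≤ exp T x i := by
  have key : exp (T + c • (1 : (Fin M → ℝ) →L[ℝ] (Fin M → ℝ))) = Real.exp c • exp T :=
    exp_shift T c
  have h2 : 0 ≤ exp (T + c • (1 : (Fin M → ℝ) →L[ℝ] (Fin M → ℝ))) x i := by
    refine exp_nonneg_aux _ ?_ x hx i
    intro y hy j
    simpa [mul_comm] using hT y hy j
  rw [key] at h2
  have h3 : (Real.exp c • exp T) x i = Real.exp c * exp T x i := by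
    simp
  rw [h3] at h2
  exact nonneg_of_mul_nonneg_right h2 (Real.exp_pos c)

end WmatAux

/-- **Monotonicity of extreme components for the adjoint flow of a W-matrix.**
If `H` has nonnegative off-diagonal entries and columns summing to zero, and
`η' = Hᵀ η` for `t ≥ 0`, then the largest component of `η` is nonincreasing and
the smallest component is nondecreasing. -/
theorem W_matrix_adjoint_max_min_monotone
    (M : ℕ) (hM : 0 < M) (H : Matrix (Fin M) (Fin M) ℝ)
    (hoffdiag : ∀ i j, i ≠ j → 0 ≤ H i j)
    (hcol : ∀ i, H i i = -∑ k ∈ Finset.univ.erase i, H k i)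
    (η : ℝ → Fin M → ℝ)
    (hη : ∀ t : ℝ, 0 ≤ t → HasDerivAt η (H.transpose.mulVec (η t)) t) :
    ∀ s t : ℝ, 0 ≤ s → s ≤ t →
      (⨆ i, η t i) ≤ (⨆ i, η s i) ∧ (⨅ i, η s i) ≤ (⨅ i, η t i) := by
  have : Nonempty (Fin M) := Fin.pos_iff_nonempty.mp hM
  intro s t hs hst
  set T : (Fin M → ℝ) →L[ℝ] (Fin M → ℝ) :=
    LinearMap.toContinuousLinearMap (Matrix.mulVecLin H.transpose) with hT
  have hTx : ∀ x, T x = H.transpose.mulVec x := fun x => rfl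
  -- T kills the constant vector 1
  have hT1 : T (fun _ => 1) = 0 := by
    funext i
    rw [hTx]
    simp only [Matrix.mulVec, dotProduct, Matrix.transpose_apply, mul_one, Pi.zero_apply]
    rw [← Finset.add_sum_erase _ _ (Finset.mem_univ i), hcol i]
    ring
  -- shifted positivity of T
  set c : ℝ := ∑ i, |H i i| with hc
  have hshift : ∀ x : Fin M → ℝ, (∀ i, 0 ≤ x i) → ∀ i, 0 ≤ T x i + c * x i := by
    intro x hx i
    rw [hTx]
    simp only [Matrix.mulVec, dotProduct, Matrix.transpose_apply]
    rw [← Finset.add_sum_erase _ _ (Finset.mem_univ i)]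
    have h1 : 0 ≤ ∑ j ∈ Finset.univ.erase i, H j i * x j :=
      Finset.sum_nonneg fun j hj =>
        mul_nonneg (hoffdiag j i (Finset.ne_of_mem_erase hj)) (hx j)
    have h2 : 0 ≤ (H i i + c) * x i := by
      refine mul_nonneg ?_ (hx i)
      have : |H i i| ≤ c := Finset.single_le_sum (f := fun j => |H j j|)
        (fun j _ => abs_nonneg _) (Finset.mem_univ i)
      linarith [neg_abs_le (H i i)]
    nlinarith
  -- solve the ODE on [s, t]
  have hηt : η t = exp ((t - s) • T) (η s) := by
    set g : ℝ → Fin M → ℝ := fun u => exp ((u - s) • T) (η s) with hg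
    have hgd : ∀ u : ℝ, HasDerivAt g (T (g u)) u := by
      intro u
      have h2 := hasDerivAt_exp_smul_const' (𝕂 := ℝ) T (u - s)
      have h3 : HasDerivAt (fun v : ℝ => v - s) 1 u := (hasDerivAt_id u).sub_const s
      have h1 : HasDerivAt (fun u : ℝ => exp ((u - s) • T))
          (T * exp ((u - s) • T)) u := by
        simpa [Function.comp_def] using HasDerivAt.scomp u h2 h3
      have := h1.clm_apply (hasDerivAt_const u (η s))
      simpa [ContinuousLinearMap.mul_apply] using this
    have huniq := ODE_solution_unique (v := fun _ x => T x) (K := ‖T‖₊)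
      (f := η) (g := g) (a := s) (b := t)
      (fun _ => T.lipschitz)
      (fun u hu => ((hη u (hs.trans hu.1)).continuousAt).continuousWithinAt)
      (fun u hu => by
        have := (hη u (hs.trans hu.1)).hasDerivWithinAt (s := Set.Ici u)
        rwa [← hTx] at this)
      (Continuous.continuousOn (by
        exact continuous_iff_continuousAt.mpr fun u => (hgd u).continuousAt))
      (fun u hu => (hgd u).hasDerivWithinAt)
      (by simp [hg, exp_zero])
    exact huniq (Set.right_mem_Icc.mpr hst)
  have hτ : 0 ≤ t - s := sub_nonneg.mpr hst
  -- the shifted positivity for (t-s) • T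
  have hshift' : ∀ x : Fin M → ℝ, (∀ i, 0 ≤ x i) → ∀ i,
      0 ≤ ((t - s) • T) x i + ((t - s) * c) * x i := by
    intro x hx i
    have := hshift x hx i
    have h : ((t - s) • T) x i = (t - s) * (T x i) := by simp
    rw [h]
    nlinarith
  have hone : ∀ i, exp ((t - s) • T) (fun _ => 1) i = 1 := by
    intro i
    refine WmatAux.exp_fixes_one _ ?_ i
    rw [ContinuousLinearMap.smul_apply, hT1, smul_zero]
  have hbdd : BddAbove (Set.range fun i => η s i) := Set.Finite.bddAbove (Set.finite_range _)
  have hbdd' : BddBelow (Set.range fun i => η s i) := Set.Finite.bddBelow (Set.finite_range _)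
  constructor
  · -- max nonincreasing
    refine ciSup_le fun i => ?_
    set m : ℝ := ⨆ j, η s j with hm
    have hy : ∀ j, 0 ≤ (fun j => m - η s j) j := by
      intro j
      have : η s j ≤ m := le_ciSup hbdd j
      simpa using this
    have hpos := WmatAux.exp_nonneg ((t - s) • T) ((t - s) * c) hshift' _ hy i
    have hsplit : exp ((t - s) • T) (fun j => m - η s j) i
        = m * (exp ((t - s) • T) (fun _ => 1) i) - exp ((t - s) • T) (η s) i := by
      have h1 : (fun j => m - η s j) = m • (fun _ => (1 : ℝ)) - η s := by
        funext j; simp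
      rw [h1, map_sub, map_smul]
      simp
    rw [hsplit, hone i] at hpos
    rw [hηt]
    linarith
  · -- min nondecreasing
    refine le_ciInf fun i => ?_
    set m : ℝ := ⨅ j, η s j with hm
    have hy : ∀ j, 0 ≤ (fun j => η s j - m) j := by
      intro j
      have : m ≤ η s j := ciInf_le hbdd' j
      simpa using this
    have hpos := WmatAux.exp_nonneg ((t - s) • T) ((t - s) * c) hshift' _ hy i
    have hsplit : exp ((t - s) • T) (fun j => η s j - m) i
        = exp ((t - s) • T) (η s) i - m * (exp ((t - s) • T) (fun _ => 1) i) := by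
      have h1 : (fun j => η s j - m) = η s - m • (fun _ => (1 : ℝ)) := by
        funext j; simp
      rw [h1, map_sub, map_smul]
      simp
    rw [hsplit, hone i] at hpos
    rw [hηt]
    linarith
end

section
/- Let T = diag(1/τ_1, …, 1/τ_N) with τ_i > 0, let μ ∈ ℝ^N with μ_i ≥ 0 and ∑_i μ_i = 1, let A = (μ e^T − I) T, and let σ² > 0 and ω ≠ 0 be real. Then every complex eigenvalue λ of the matrix −ω² σ² T + A satisfies Re λ ≤ −ω² σ² / max_j τ_j < 0; in particular all eigenvalues lie strictly in the open left half plane. -/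
open Matrix


/-- **Fourier modes of the internal-states diffusion system are strictly damped.**
With `T = diag (1/τᵢ)`, `τᵢ > 0`, `μᵢ ≥ 0`, `∑ μᵢ = 1`, `A = (μ eᵀ - I) T`,
`σ² > 0` and `ω ≠ 0`, every complex eigenvalue `l` of `-ω² σ² T + A` satisfies
`Re l ≤ -ω² σ² / max τⱼ < 0`. -/
theorem internal_states_fourier_modes_damped
    (N : ℕ) (hN : 0 < N) (τ : Fin N → ℝ) (hτ : ∀ i, 0 < τ i)
    (μ : Fin N → ℝ) (hμ0 : ∀ i, 0 ≤ μ i) (hμ : ∑ i, μ i = 1)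
    (σ2 ω : ℝ) (hσ2 : 0 < σ2) (hω : ω ≠ 0) :
    ∀ (l : ℂ) (v : Fin N → ℂ), v ≠ 0 →
      Matrix.mulVec
        (Matrix.map
          ((-(ω ^ 2 * σ2)) • Matrix.diagonal (fun i => (τ i)⁻¹) +
            (Matrix.vecMulVec μ (fun _ => (1 : ℝ)) - 1) * Matrix.diagonal fun i => (τ i)⁻¹)
          (fun x : ℝ => (x : ℂ))) v = l • v →
      l.re ≤ -(ω ^ 2 * σ2) / (Finset.univ.sup' ⟨⟨0, hN⟩, Finset.mem_univ _⟩ τ) ∧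
      -(ω ^ 2 * σ2) / (Finset.univ.sup' ⟨⟨0, hN⟩, Finset.mem_univ _⟩ τ) < 0 := by
  intro l v hv hmul
  have hcpos : 0 < ω ^ 2 * σ2 := by positivity
  set c : ℝ := ω ^ 2 * σ2 with hc
  set M : Matrix (Fin N) (Fin N) ℝ :=
    (-c) • Matrix.diagonal (fun i => (τ i)⁻¹) +
      (Matrix.vecMulVec μ (fun _ => (1 : ℝ)) - 1) * Matrix.diagonal fun i => (τ i)⁻¹ with hM
  set Mc : Matrix (Fin N) (Fin N) ℂ := M.map (fun x : ℝ => (x : ℂ)) with hMc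
  set τmax : ℝ := Finset.univ.sup' ⟨⟨0, hN⟩, Finset.mem_univ _⟩ τ with hτmax
  have hτmaxpos : 0 < τmax :=
    lt_of_lt_of_le (hτ ⟨0, hN⟩) (Finset.le_sup' τ (Finset.mem_univ _))
  have hMentry : ∀ i j, M i j =
      -c * (if i = j then (τ i)⁻¹ else 0) + (μ i - if i = j then 1 else 0) * (τ j)⁻¹ := by
    intro i j
    simp [hM, Matrix.add_apply, Matrix.diagonal_apply, Matrix.mul_diagonal,
      Matrix.sub_apply, Matrix.vecMulVec_apply, Matrix.one_apply]
    split_ifs <;> ring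
  -- det (Mc - l • 1) = 0
  have hdet : (Mc - l • 1).det = 0 := by
    rw [← Matrix.exists_mulVec_eq_zero_iff]
    refine ⟨v, hv, ?_⟩
    rw [Matrix.sub_mulVec, Matrix.smul_mulVec, Matrix.one_mulVec, hmul, sub_self]
  have hdetT : (Mcᵀ - l • 1).det = 0 := by
    have : Mcᵀ - l • 1 = (Mc - l • 1)ᵀ := by
      rw [Matrix.transpose_sub, Matrix.transpose_smul, Matrix.transpose_one]
    rw [this, Matrix.det_transpose, hdet]
  obtain ⟨w, hw, hww⟩ := Matrix.exists_mulVec_eq_zero_iff.mpr hdetT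
  have hwe : Mcᵀ.mulVec w = l • w := by
    rw [Matrix.sub_mulVec, Matrix.smul_mulVec, Matrix.one_mulVec, sub_eq_zero] at hww
    exact hww
  have heig : Module.End.HasEigenvalue (Matrix.toLin' Mcᵀ) l := by
    apply Module.End.hasEigenvalue_of_hasEigenvector (x := w)
    exact ⟨Module.End.mem_eigenspace_iff.mpr (by simpa [Matrix.toLin'_apply] using hwe), hw⟩
  obtain ⟨k, hk⟩ := eigenvalue_mem_ball heig
  rw [mem_closedBall_iff_norm] at hk
  -- compute the center and radius
  have hkk : (Mcᵀ k k) = ((M k k : ℝ) : ℂ) := by simp [hMc]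
  have hrad : ∑ j ∈ Finset.univ.erase k, ‖Mcᵀ k j‖ = (1 - μ k) / τ k := by
    have : ∀ j ∈ Finset.univ.erase k, ‖Mcᵀ k j‖ = μ j / τ k := by
      intro j hj
      have hjk : j ≠ k := Finset.ne_of_mem_erase hj
      have : M j k = μ j * (τ k)⁻¹ := by
        rw [hMentry j k]; simp [hjk]
      simp [hMc, Matrix.transpose_apply, this, abs_mul, abs_inv,
        abs_of_nonneg (hμ0 j), abs_of_pos (hτ k), div_eq_mul_inv]
    rw [Finset.sum_congr rfl this, ← Finset.sum_div,
      Finset.sum_erase_eq_sub (Finset.mem_univ k), hμ]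
  -- Re l ≤ M k k + radius
  have hre : l.re ≤ M k k + (1 - μ k) / τ k := by
    have h1 : (l - Mcᵀ k k).re ≤ ‖l - Mcᵀ k k‖ := Complex.re_le_norm _
    have h2 : (l - Mcᵀ k k).re = l.re - M k k := by rw [hkk]; simp
    rw [h2] at h1
    have := le_trans h1 hk
    rw [hrad] at this
    linarith
  have hMkk : M k k = (-c + (μ k - 1)) * (τ k)⁻¹ := by
    rw [hMentry k k]; simp; ring
  have hre2 : l.re ≤ -c / τ k := by
    rw [hMkk] at hre
    rw [div_eq_mul_inv]
    have h3 : (-c + (μ k - 1)) * (τ k)⁻¹ + (1 - μ k) * ((τ k)⁻¹) = -c * (τ k)⁻¹ := by ring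
    have h4 : (1 - μ k) / τ k = (1 - μ k) * (τ k)⁻¹ := div_eq_mul_inv _ _
    linarith
  have hτk_le : τ k ≤ τmax := Finset.le_sup' τ (Finset.mem_univ k)
  have hmain : -c / τ k ≤ -c / τmax := by
    rw [neg_div, neg_div, neg_le_neg_iff]
    exact div_le_div_of_nonneg_left (le_of_lt hcpos) (hτ k) hτk_le
  refine ⟨le_trans hre2 hmain, ?_⟩
  rw [neg_div]
  exact neg_neg_of_pos (div_pos hcpos hτmaxpos)
end

section
/- Let T = diag(1/τ_1, …, 1/τ_N) with τ_i > 0, let μ ∈ ℝ^N with μ_i ≥ 0 and ∑_i μ_i = 1, let A = (μ e^T − I) T, and let k > 0. Then every complex eigenvalue λ of the matrix A − k T satisfies Re λ ≤ −k / max_j τ_j < 0, i.e. all eigenvalues of A − kT lie strictly in the open left half plane. -/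
/-- **The generator of the internal-states annihilation model I is strictly stable.**
With `T = diag (1/τᵢ)`, `τᵢ > 0`, `μᵢ ≥ 0`, `∑ μᵢ = 1`, `A = (μ eᵀ - I) T` and `k > 0`,
every complex eigenvalue `l` of `A - k T` satisfies `Re l ≤ -k / max τⱼ < 0`. -/
theorem annihilation_modelI_generator_stable
    (N : ℕ) (hN : 0 < N) (τ : Fin N → ℝ) (hτ : ∀ i, 0 < τ i)
    (μ : Fin N → ℝ) (hμ0 : ∀ i, 0 ≤ μ i) (hμ : ∑ i, μ i = 1)
    (k : ℝ) (hk : 0 < k) :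
    ∀ (l : ℂ) (v : Fin N → ℂ), v ≠ 0 →
      Matrix.mulVec
        (Matrix.map
          ((Matrix.vecMulVec μ (fun _ => (1 : ℝ)) - 1) * Matrix.diagonal (fun i => (τ i)⁻¹) -
            k • Matrix.diagonal fun i => (τ i)⁻¹)
          (fun x : ℝ => (x : ℂ))) v = l • v →
      l.re ≤ -k / (Finset.univ.sup' ⟨⟨0, hN⟩, Finset.mem_univ _⟩ τ) ∧
      -k / (Finset.univ.sup' ⟨⟨0, hN⟩, Finset.mem_univ _⟩ τ) < 0 := by
  intro l v hv hmv
  set τmax := Finset.univ.sup' ⟨⟨0, hN⟩, Finset.mem_univ _⟩ τ with hτmax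
  have hτmaxpos : 0 < τmax :=
    lt_of_lt_of_le (hτ ⟨0, hN⟩) (Finset.le_sup' τ (Finset.mem_univ _))
  have hneg : -k / τmax < 0 := div_neg_of_neg_of_pos (neg_neg_of_pos hk) hτmaxpos
  refine ⟨?_, hneg⟩
  set M := Matrix.map
      ((Matrix.vecMulVec μ (fun _ => (1 : ℝ)) - 1) * Matrix.diagonal (fun i => (τ i)⁻¹) -
        k • Matrix.diagonal fun i => (τ i)⁻¹) (fun x : ℝ => (x : ℂ)) with hM
  -- entries of M
  have hMe : ∀ i j, M i j =
      (((μ i - if i = j then 1 else 0) * (τ j)⁻¹ - (if i = j then k * (τ j)⁻¹ else 0) : ℝ) : ℂ) := by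
    intro i j
    simp [hM, Matrix.map_apply, Matrix.sub_apply, Matrix.mul_diagonal,
      Matrix.vecMulVec_apply, Matrix.one_apply, Matrix.smul_apply,
      Matrix.diagonal_apply, mul_ite, mul_comm]
    split <;> simp_all
  -- l is an eigenvalue of M, hence of Mᵀ
  have hdet : (M - l • 1).det = 0 := by
    rw [← Matrix.exists_mulVec_eq_zero_iff]
    refine ⟨v, hv, ?_⟩
    rw [Matrix.sub_mulVec, Matrix.smul_mulVec, Matrix.one_mulVec, hmv, sub_self]
  have hdetT : (M.transpose - l • 1).det = 0 := by
    rw [← Matrix.det_transpose]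
    simpa [Matrix.transpose_sub, Matrix.transpose_smul] using hdet
  obtain ⟨w, hw0, hw⟩ := (Matrix.exists_mulVec_eq_zero_iff).mpr hdetT
  have heig : Module.End.HasEigenvalue (Matrix.toLin' M.transpose) l := by
    apply Module.End.hasEigenvalue_of_hasEigenvector (x := w)
    refine ⟨Module.End.mem_eigenspace_iff.mpr ?_, hw0⟩
    rw [Matrix.sub_mulVec, Matrix.smul_mulVec, Matrix.one_mulVec, sub_eq_zero] at hw
    simpa [Matrix.toLin'_apply] using hw
  obtain ⟨j, hj⟩ := eigenvalue_mem_ball heig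
  rw [Metric.mem_closedBall, dist_eq_norm] at hj
  -- compute the Gershgorin data
  have hdiag : M.transpose j j = (((μ j - 1 - k) * (τ j)⁻¹ : ℝ) : ℂ) := by
    rw [Matrix.transpose_apply, hMe j j]
    push_cast [if_pos rfl]
    ring
  have hrad : ∑ i ∈ Finset.univ.erase j, ‖M.transpose j i‖ = (1 - μ j) * (τ j)⁻¹ := by
    have : ∀ i ∈ Finset.univ.erase j, ‖M.transpose j i‖ = μ i * (τ j)⁻¹ := by
      intro i hi
      have hij : i ≠ j := Finset.ne_of_mem_erase hi
      rw [Matrix.transpose_apply, hMe i j, if_neg hij, if_neg hij]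
      simp only [sub_zero, Complex.norm_real, Real.norm_eq_abs, abs_mul, abs_inv]
      rw [abs_of_nonneg (hμ0 i), abs_of_pos (hτ j)]
    rw [Finset.sum_congr rfl this, ← Finset.sum_mul]
    have hsum : ∑ i ∈ Finset.univ.erase j, μ i = 1 - μ j := by
      rw [Finset.sum_erase_eq_sub (Finset.mem_univ j), hμ]
    rw [hsum]
  rw [hdiag, hrad] at hj
  -- conclude
  have hre : l.re ≤ (μ j - 1 - k) * (τ j)⁻¹ + (1 - μ j) * (τ j)⁻¹ := by
    have h1 : (l - (((μ j - 1 - k) * (τ j)⁻¹ : ℝ) : ℂ)).re ≤ ‖l - (((μ j - 1 - k) * (τ j)⁻¹ : ℝ) : ℂ)‖ :=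
      Complex.re_le_norm _
    have h2 : (l - (((μ j - 1 - k) * (τ j)⁻¹ : ℝ) : ℂ)).re = l.re - (μ j - 1 - k) * (τ j)⁻¹ := by
      simp [Complex.sub_re, Complex.ofReal_re]
    linarith
  have heq : (μ j - 1 - k) * (τ j)⁻¹ + (1 - μ j) * (τ j)⁻¹ = -k / τ j := by ring
  have hmono : k / τmax ≤ k / τ j :=
    div_le_div_of_nonneg_left hk.le (hτ j) (Finset.le_sup' τ (Finset.mem_univ j))
  have : -k / τ j ≤ -k / τmax := by
    rw [neg_div, neg_div]; linarith
  linarith [hre, heq ▸ hre]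
end

section
/- Let T = diag(1/τ_1, …, 1/τ_N) with τ_i > 0, let μ ∈ ℝ^N with μ_i ≥ 0 and ∑_i μ_i = 1, let A = (μ e^T − I) T, and let k > 0. Then for every initial vector ξ₀ ∈ ℝ^N, exp(t(A − kT)) ξ₀ → 0 as t → ∞. -/
open Matrix Filter NormedSpace

/-- Entries of powers of an entrywise-nonnegative matrix are nonnegative. -/
lemma aux_pow_entry_nonneg {N : ℕ} {B : Matrix (Fin N) (Fin N) ℝ}
    (hB : ∀ i j, 0 ≤ B i j) (n : ℕ) : ∀ i j, 0 ≤ (B ^ n) i j := by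
  induction n with
  | zero =>
    intro i j
    simp only [pow_zero, Matrix.one_apply]
    split <;> norm_num
  | succ n ih =>
    intro i j
    rw [pow_succ, Matrix.mul_apply]
    exact Finset.sum_nonneg fun l _ => mul_nonneg (ih i l) (hB l j)

/-- Column sums of powers are bounded by powers of the column-sum bound. -/
lemma aux_pow_colsum_le {N : ℕ} {B : Matrix (Fin N) (Fin N) ℝ} {s : ℝ}
    (hB : ∀ i j, 0 ≤ B i j) (hs0 : 0 ≤ s) (hs : ∀ j, ∑ i, B i j ≤ s) (n : ℕ) :
    ∀ j, ∑ i, (B ^ n) i j ≤ s ^ n := by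
  induction n with
  | zero =>
    intro j
    simp [Matrix.one_apply]
  | succ n ih =>
    intro j
    rw [pow_succ]
    calc ∑ i, (B ^ n * B) i j = ∑ l, (∑ i, (B ^ n) i l) * B l j := by
          simp_rw [Matrix.mul_apply, Finset.sum_mul]
          rw [Finset.sum_comm]
      _ ≤ ∑ l, s ^ n * B l j :=
          Finset.sum_le_sum fun l _ =>
            mul_le_mul_of_nonneg_right (ih l) (hB l j)
      _ = s ^ n * ∑ l, B l j := by rw [Finset.mul_sum]
      _ ≤ s ^ n * s := mul_le_mul_of_nonneg_left (hs j) (pow_nonneg hs0 n)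
      _ = s ^ (n + 1) := (pow_succ s n).symm

/-- Entry bound for powers. -/
lemma aux_pow_entry_le {N : ℕ} {B : Matrix (Fin N) (Fin N) ℝ} {s : ℝ}
    (hB : ∀ i j, 0 ≤ B i j) (hs0 : 0 ≤ s) (hs : ∀ j, ∑ i, B i j ≤ s) (n : ℕ)
    (i j : Fin N) : (B ^ n) i j ≤ s ^ n :=
  le_trans
    (Finset.single_le_sum (f := fun i => (B ^ n) i j)
      (fun l _ => aux_pow_entry_nonneg hB n l j) (Finset.mem_univ i))
    (aux_pow_colsum_le hB hs0 hs n j)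

/-- Entrywise bounds for the exponential of a nonnegative matrix. -/
lemma aux_exp_entry_bound {N : ℕ} {B : Matrix (Fin N) (Fin N) ℝ} {s : ℝ}
    (hB : ∀ i j, 0 ≤ B i j) (hs0 : 0 ≤ s) (hs : ∀ j, ∑ i, B i j ≤ s)
    {t : ℝ} (ht : 0 ≤ t) (i j : Fin N) :
    0 ≤ (exp (t • B)) i j ∧ (exp (t • B)) i j ≤ Real.exp (t * s) := by
  have hterm : ∀ (i j : Fin N) (n : ℕ),
      ((n.factorial : ℝ)⁻¹ • (t • B) ^ n) i j = t ^ n / n.factorial * (B ^ n) i j := by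
    intro i j n
    rw [smul_pow]
    simp [Matrix.smul_apply, smul_eq_mul, div_eq_inv_mul, mul_assoc]
  have hnn : ∀ (i j : Fin N) (n : ℕ), 0 ≤ t ^ n / n.factorial * (B ^ n) i j := fun i j n =>
    mul_nonneg (div_nonneg (pow_nonneg ht n) (by positivity))
      (aux_pow_entry_nonneg hB n i j)
  have hle : ∀ (i j : Fin N) (n : ℕ),
      t ^ n / n.factorial * (B ^ n) i j ≤ (t * s) ^ n / n.factorial := by
    intro i j n
    calc t ^ n / n.factorial * (B ^ n) i j
        ≤ t ^ n / n.factorial * s ^ n :=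
          mul_le_mul_of_nonneg_left (aux_pow_entry_le hB hs0 hs n i j)
            (div_nonneg (pow_nonneg ht n) (by positivity))
      _ = (t * s) ^ n / n.factorial := by rw [mul_pow]; ring
  have hsummable : ∀ i j : Fin N, Summable fun n : ℕ => t ^ n / n.factorial * (B ^ n) i j := by
    intro i j
    exact Summable.of_nonneg_of_le (hnn i j) (hle i j)
      (Real.summable_pow_div_factorial (t * s))
  -- exp equals the entrywise tsum matrix
  have hexp : exp (t • B) = fun i j => ∑' n : ℕ, t ^ n / n.factorial * (B ^ n) i j := by
    rw [exp_eq_tsum ℝ]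
    have hHS : HasSum (fun n : ℕ => (n.factorial : ℝ)⁻¹ • (t • B) ^ n)
        (fun i j => ∑' n : ℕ, t ^ n / n.factorial * (B ^ n) i j) := by
      refine Pi.hasSum.mpr fun i => ?_
      rw [Pi.hasSum]
      intro j
      simp_rw [hterm i j]
      exact (hsummable i j).hasSum
    exact hHS.tsum_eq
  constructor
  · rw [hexp]
    exact tsum_nonneg (hnn i j)
  · rw [hexp]
    have : Real.exp (t * s) = ∑' n : ℕ, (t * s) ^ n / n.factorial := by
      rw [Real.exp_eq_exp_ℝ, exp_eq_tsum_div]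
    rw [this]
    exact Summable.tsum_le_tsum (hle i j) (hsummable i j)
      (Real.summable_pow_div_factorial (t * s))

/-- **Decay to zero for the internal-states annihilation model I.**
With `T = diag (1/τᵢ)`, `τᵢ > 0`, `μᵢ ≥ 0`, `∑ μᵢ = 1`, `A = (μ eᵀ - I) T` and `k > 0`,
for every initial vector `ξ₀` we have `exp (t (A - k T)) ξ₀ → 0` as `t → ∞`. -/
theorem annihilation_modelI_decay_to_zero
    (N : ℕ) (τ : Fin N → ℝ) (hτ : ∀ i, 0 < τ i)
    (μ : Fin N → ℝ) (hμ0 : ∀ i, 0 ≤ μ i) (hμ : ∑ i, μ i = 1)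
    (k : ℝ) (hk : 0 < k) :
    ∀ ξ₀ : Fin N → ℝ,
      Filter.Tendsto
        (fun t : ℝ =>
          (NormedSpace.exp
            (t • ((Matrix.vecMulVec μ (fun _ => (1 : ℝ)) - 1) *
                Matrix.diagonal (fun i => (τ i)⁻¹) -
              k • Matrix.diagonal fun i => (τ i)⁻¹))).mulVec ξ₀)
        Filter.atTop (nhds 0) := by
  intro ξ₀
  rcases Nat.eq_zero_or_pos N with hN | hN
  · subst hN
    have h0 : ∀ t : ℝ,
        (NormedSpace.exp
            (t • ((Matrix.vecMulVec μ (fun _ => (1 : ℝ)) - 1) *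
                Matrix.diagonal (fun i => (τ i)⁻¹) -
              k • Matrix.diagonal fun i => (τ i)⁻¹))).mulVec ξ₀ = 0 :=
      fun t => Subsingleton.elim _ _
    simp only [h0]
    exact tendsto_const_nhds
  haveI : Nonempty (Fin N) := ⟨⟨0, hN⟩⟩
  set M : Matrix (Fin N) (Fin N) ℝ :=
    (Matrix.vecMulVec μ (fun _ => (1 : ℝ)) - 1) *
      Matrix.diagonal (fun i => (τ i)⁻¹) - k • Matrix.diagonal fun i => (τ i)⁻¹ with hMdef
  have hMapply : ∀ i j, M i j =
      μ i * (τ j)⁻¹ - (if i = j then (1 + k) * (τ j)⁻¹ else 0) := by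
    intro i j
    by_cases h : i = j
    · subst h
      simp only [hMdef, Matrix.sub_apply, Matrix.mul_diagonal, Matrix.vecMulVec_apply,
        Matrix.one_apply_eq, Matrix.smul_apply, Matrix.diagonal_apply_eq, smul_eq_mul,
        if_pos rfl, if_true, eq_self_iff_true]
      ring
    · simp only [hMdef, Matrix.sub_apply, Matrix.mul_diagonal, Matrix.vecMulVec_apply,
        Matrix.one_apply_ne h, Matrix.smul_apply, Matrix.diagonal_apply_ne _ h, smul_eq_mul,
        if_neg h]
      ring
  -- bounds on (τ j)⁻¹
  set l : ℝ := Finset.univ.inf' Finset.univ_nonempty (fun j => (τ j)⁻¹) with hldef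
  set m : ℝ := Finset.univ.sup' Finset.univ_nonempty (fun j => (τ j)⁻¹) with hmdef
  have hl_le : ∀ j, l ≤ (τ j)⁻¹ := fun j => by
    rw [hldef]; exact Finset.inf'_le (fun j => (τ j)⁻¹) (Finset.mem_univ j)
  have hle_m : ∀ j, (τ j)⁻¹ ≤ m := fun j => by
    rw [hmdef]; exact Finset.le_sup' (fun j => (τ j)⁻¹) (Finset.mem_univ j)
  have hl_pos : 0 < l := by
    obtain ⟨j, -, hj⟩ := Finset.exists_mem_eq_inf' Finset.univ_nonempty (fun j => (τ j)⁻¹)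
    rw [hldef, hj]
    exact inv_pos.mpr (hτ j)
  set c : ℝ := (1 + k) * m with hcdef
  set β : ℝ := k * l with hβdef
  have hβ_pos : 0 < β := mul_pos hk hl_pos
  set s : ℝ := c - β with hsdef
  have hs0 : 0 ≤ s := by
    have h1 : (1 + k) * l ≤ (1 + k) * m :=
      mul_le_mul_of_nonneg_left (le_trans (hl_le ⟨0, hN⟩) (hle_m ⟨0, hN⟩))
        (by linarith)
    have : k * l ≤ (1 + k) * l := by nlinarith [hl_pos.le]
    simp only [hsdef, hcdef, hβdef]
    linarith
  set B : Matrix (Fin N) (Fin N) ℝ := M + c • 1 with hBdef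
  have hBapply : ∀ i j, B i j =
      μ i * (τ j)⁻¹ - (if i = j then (1 + k) * (τ j)⁻¹ else 0)
        + (if i = j then c else 0) := by
    intro i j
    simp only [hBdef, Matrix.add_apply, Matrix.smul_apply, Matrix.one_apply, smul_eq_mul,
      hMapply i j]
    split <;> ring_nf
  have hB : ∀ i j, 0 ≤ B i j := by
    intro i j
    rw [hBapply i j]
    by_cases hij : i = j
    · subst hij
      rw [if_pos rfl, if_pos rfl]
      have h1 : (1 + k) * (τ i)⁻¹ ≤ c := by
        rw [hcdef]
        exact mul_le_mul_of_nonneg_left (hle_m i) (by linarith)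
      have h2 : 0 ≤ μ i * (τ i)⁻¹ := mul_nonneg (hμ0 i) (inv_pos.mpr (hτ i)).le
      linarith
    · simp only [if_neg hij]
      have h2 : 0 ≤ μ i * (τ j)⁻¹ := mul_nonneg (hμ0 i) (inv_pos.mpr (hτ j)).le
      linarith
  have hcolsum : ∀ j, ∑ i, B i j ≤ s := by
    intro j
    have : ∑ i, B i j = (τ j)⁻¹ - (1 + k) * (τ j)⁻¹ + c := by
      simp_rw [hBapply]
      rw [Finset.sum_add_distrib, Finset.sum_sub_distrib, ← Finset.sum_mul, hμ]
      rw [Finset.sum_ite_eq' Finset.univ j (fun _ => (1 + k) * (τ j)⁻¹),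
        Finset.sum_ite_eq' Finset.univ j (fun _ => c)]
      simp
    rw [this, hsdef, hβdef]
    have hkτ : k * l ≤ k * (τ j)⁻¹ := mul_le_mul_of_nonneg_left (hl_le j) hk.le
    ring_nf
    ring_nf at hkτ ⊢
    nlinarith [hkτ]
  -- exp (t • M) = Real.exp (-(t*c)) • exp (t • B)
  have hexp_split : ∀ t : ℝ, exp (t • M) = Real.exp (-(t * c)) • exp (t • B) := by
    intro t
    have hMB : t • M = t • B + (-(t * c)) • (1 : Matrix (Fin N) (Fin N) ℝ) := by
      rw [hBdef]
      rw [smul_add, smul_smul]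
      module
    have hcomm : Commute (t • B) ((-(t * c)) • (1 : Matrix (Fin N) (Fin N) ℝ)) :=
      ((Commute.one_right (t • B)).smul_right _)
    rw [hMB, Matrix.exp_add_of_commute _ _ hcomm]
    have h1 : (-(t * c)) • (1 : Matrix (Fin N) (Fin N) ℝ) =
        Matrix.diagonal (fun _ => -(t * c)) := by
      ext i j
      by_cases h : i = j <;> simp [Matrix.diagonal_apply, h]
    rw [h1, Matrix.exp_diagonal]
    have h2 : exp (fun _ : Fin N => -(t * c)) = fun _ : Fin N => Real.exp (-(t * c)) := by
      rw [Pi.exp_def]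
      funext i
      rw [Real.exp_eq_exp_ℝ]
    rw [h2]
    have h3 : Matrix.diagonal (fun _ : Fin N => Real.exp (-(t * c))) =
        Real.exp (-(t * c)) • (1 : Matrix (Fin N) (Fin N) ℝ) := by
      ext i j
      by_cases h : i = j <;> simp [Matrix.diagonal_apply, h]
    rw [h3, mul_smul_comm, mul_one]
  -- entrywise bound on exp (t • M)
  have hentry : ∀ t : ℝ, 0 ≤ t → ∀ i j,
      0 ≤ (exp (t • M)) i j ∧ (exp (t • M)) i j ≤ Real.exp (-(β * t)) := by
    intro t ht i j
    obtain ⟨h1, h2⟩ := aux_exp_entry_bound hB hs0 hcolsum ht i j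
    rw [hexp_split t]
    constructor
    · exact mul_nonneg (Real.exp_nonneg _) h1
    · calc Real.exp (-(t * c)) * (exp (t • B)) i j
          ≤ Real.exp (-(t * c)) * Real.exp (t * s) :=
            mul_le_mul_of_nonneg_left h2 (Real.exp_nonneg _)
        _ = Real.exp (-(t * c) + t * s) := (Real.exp_add _ _).symm
        _ = Real.exp (-(β * t)) := by
            rw [hsdef]; ring_nf
  -- conclude via squeeze
  set C : ℝ := ∑ j, |ξ₀ j| with hCdef
  have hC0 : 0 ≤ C := Finset.sum_nonneg fun j _ => abs_nonneg _
  apply squeeze_zero_norm' (a := fun t => C * Real.exp (-(β * t)))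
  · filter_upwards [eventually_ge_atTop (0 : ℝ)] with t ht
    have hbound : ∀ i, |((exp (t • M)).mulVec ξ₀) i| ≤ C * Real.exp (-(β * t)) := by
      intro i
      rw [Matrix.mulVec, dotProduct]
      calc |∑ j, (exp (t • M)) i j * ξ₀ j|
          ≤ ∑ j, |(exp (t • M)) i j * ξ₀ j| := Finset.abs_sum_le_sum_abs _ _
        _ ≤ ∑ j, Real.exp (-(β * t)) * |ξ₀ j| := by
            apply Finset.sum_le_sum
            intro j _
            rw [abs_mul]
            apply mul_le_mul_of_nonneg_right _ (abs_nonneg _)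
            obtain ⟨h1, h2⟩ := hentry t ht i j
            rw [abs_of_nonneg h1]
            exact h2
        _ = C * Real.exp (-(β * t)) := by
            rw [← Finset.mul_sum, hCdef, mul_comm]
    exact pi_norm_le_iff_of_nonneg
      (mul_nonneg hC0 (Real.exp_nonneg _)) |>.mpr fun i => by
        simpa [Real.norm_eq_abs] using hbound i
  · have h1 : Tendsto (fun t : ℝ => β * t) atTop atTop :=
      Tendsto.const_mul_atTop hβ_pos tendsto_id
    have h2 : Tendsto (fun t : ℝ => -(β * t)) atTop atBot :=
      tendsto_neg_atTop_atBot.comp h1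
    have h3 : Tendsto (fun t : ℝ => Real.exp (-(β * t))) atTop (nhds 0) :=
      Real.tendsto_exp_atBot.comp h2
    simpa using h3.const_mul C
end

section
/- Let A be a real N×N matrix with e^T A = 0, let K_{ijk} and L_{ijk} (i,j,k = 1,…,N) be arbitrary real three-index arrays, and let u∞, v∞ ∈ ℝ^N. Define the N×N blocks: K₁₁ = diag_i(∑_{j,k} K_{ijk} (v∞)_j), K₂₂ = diag_i(∑_{j,k} K_{jik} (u∞)_j), L₃ = diag_i(∑_{j,k} L_{jki}), (L₁)_{ij} = ∑_k L_{ikj}, (L₂)_{ij} = ∑_k L_{kij}, (K₁₂)_{ij} = ∑_k K_{ijk} (u∞)_i, (K₂₁)_{ij} = ∑_k K_{jik} (v∞)_i, (K₃₂)_{ij} = ∑_k K_{kji} (u∞)_k, (K₃₁)_{ij} = ∑_k K_{jki} (v∞)_k, and the 3N×3N block matrix B = [[A − K₁₁, −K₁₂, L₁], [−K₂₁, A − K₂₂, L₂], [K₃₁, K₃₂, A − L₃]]. Then the weighted stacked vector (e; e; 2e) is a left null vector of B: (e^T, e^T, 2e^T) B = 0. -/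
/-- **Weighted left null vector of the bimolecular Jacobian.**
For the Jacobian `B` of the internal-states mean-field system for the reversible
bimolecular reaction `Aᵢ + Bⱼ ⇌ Cₖ` linearized at `(uInf, vInf, w∞)`, the weighted
stacked vector `(e; e; 2e)` is a left null vector of `B`, provided `eᵀ A = 0`. -/
theorem bimolecular_jacobian_weighted_left_null_vector
    (N : ℕ) (A : Matrix (Fin N) (Fin N) ℝ)
    (hA : Matrix.vecMul (fun _ => (1 : ℝ)) A = 0)
    (K L : Fin N → Fin N → Fin N → ℝ)
    (uInf vInf : Fin N → ℝ) :
    Matrix.vecMul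
      (Sum.elim (fun _ : Fin N => (1 : ℝ))
        (Sum.elim (fun _ : Fin N => (1 : ℝ)) (fun _ : Fin N => (2 : ℝ))))
      (Matrix.of
        (fun p q : Fin N ⊕ (Fin N ⊕ Fin N) =>
          match p, q with
          | Sum.inl i, Sum.inl j =>
              (A - Matrix.diagonal fun i' => ∑ j', ∑ k', K i' j' k' * vInf j') i j
          | Sum.inl i, Sum.inr (Sum.inl j) => -(∑ k', K i j k' * uInf i)
          | Sum.inl i, Sum.inr (Sum.inr j) => ∑ k', L i k' j
          | Sum.inr (Sum.inl i), Sum.inl j => -(∑ k', K j i k' * vInf i)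
          | Sum.inr (Sum.inl i), Sum.inr (Sum.inl j) =>
              (A - Matrix.diagonal fun i' => ∑ j', ∑ k', K j' i' k' * uInf j') i j
          | Sum.inr (Sum.inl i), Sum.inr (Sum.inr j) => ∑ k', L k' i j
          | Sum.inr (Sum.inr i), Sum.inl j => ∑ k', K j k' i * vInf k'
          | Sum.inr (Sum.inr i), Sum.inr (Sum.inl j) => ∑ k', K k' j i * uInf k'
          | Sum.inr (Sum.inr i), Sum.inr (Sum.inr j) =>
              (A - Matrix.diagonal fun i' => ∑ j', ∑ k', L j' k' i') i j)) = 0 := by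
  have hcol : ∀ j, ∑ i, A i j = 0 := by
    intro j
    have := congrFun hA j
    simpa [Matrix.vecMul, dotProduct] using this
  have hswap2 : ∀ f : Fin N → Fin N → ℝ,
      ∑ x : Fin N, ∑ i : Fin N, 2 * f i x = (∑ i : Fin N, ∑ x : Fin N, f i x)
        + ∑ i : Fin N, ∑ x : Fin N, f i x := by
    intro f
    rw [Finset.sum_comm]
    simp [two_mul, Finset.sum_add_distrib]
  funext q
  rcases q with j | j | j <;>
    simp only [Matrix.vecMul, dotProduct, Fintype.sum_sum_type, Sum.elim_inl,
      Sum.elim_inr, Matrix.of_apply, Matrix.sub_apply, Matrix.diagonal_apply, one_mul,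
      Finset.sum_sub_distrib, Finset.sum_neg_distrib, Finset.sum_ite_eq, Finset.mem_univ,
      if_true, hcol, Pi.zero_apply, zero_sub, Finset.sum_ite_eq', Finset.mul_sum]
  · rw [hswap2 (fun i x => K j i x * vInf i)]; ring
  · rw [hswap2 (fun i x => K i j x * uInf i)]; ring
  · have h2 : ∑ x : Fin N, ∑ k' : Fin N, L k' x j
        = ∑ j' : Fin N, ∑ k' : Fin N, L j' k' j := by rw [Finset.sum_comm]
    have h3 : ∑ x : Fin N, 2 * (A x j -
        if x = j then ∑ j' : Fin N, ∑ k' : Fin N, L j' k' x else 0)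
        = -(2 * ∑ j' : Fin N, ∑ k' : Fin N, L j' k' j) := by
      simp [mul_sub, Finset.sum_sub_distrib, ← Finset.mul_sum, hcol, Finset.sum_ite_eq']
    rw [h2, h3]; ring
end
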